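/- Let G be a finite simple graph, U ⊆ V(G) a vertex cover of G, I = I(G) the edge ideal of G in the polynomial ring R = K[x_1,...,x_n], and let U also denote the ideal generated by the variables in U. Then for every k ≥ 0 and every minimal monomial generator L of I^k (a product of k edge monomials), the colon ideal (U·I^k : L) is generated by variables. -/

import Mathlib

open MvPolynomial

/-- The edge ideal of a graph `G` in `K[x_v : v ∈ V]`. -/
noncomputable def edgeIdeal {V K : Type*} [Field K] (G : SimpleGraph V) : Ideal (MvPolynomial V K) :=
  Ideal.span {p | ∃ i j : V, G.Adj i j ∧ p = X i * X j}

/-- The ideal generated by the variables indexed by a set `U` of vertices. -/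
noncomputable def varIdeal {V K : Type*} [Field K] (U : Set V) : Ideal (MvPolynomial V K) :=
  Ideal.span {p | ∃ v ∈ U, p = X v}

section Comb
variable {V : Type*}

/-- Exponent vector of a product of "edge monomials" given as a multiset of pairs. -/
noncomputable def esum (s : Multiset (V × V)) : V →₀ ℕ :=
  (s.map fun p => Finsupp.single p.1 1 + Finsupp.single p.2 1).sum

@[simp] lemma esum_zero : esum (0 : Multiset (V × V)) = 0 := rfl

lemma esum_cons (p : V × V) (s : Multiset (V × V)) :
    esum (p ::ₘ s) = Finsupp.single p.1 1 + Finsupp.single p.2 1 + esum s := by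
  simp [esum]

lemma esum_mem_of_pos {s : Multiset (V × V)} {x : V} (h : esum s x ≠ 0) :
    ∃ p ∈ s, x = p.1 ∨ x = p.2 := by
  induction s using Multiset.induction with
  | empty => simp [esum] at h
  | cons a t ih =>
    rw [esum_cons] at h
    by_cases hx : x = a.1 ∨ x = a.2
    · exact ⟨a, Multiset.mem_cons_self a t, hx⟩
    · push_neg at hx
      have : esum t x ≠ 0 := by
        intro h0
        apply h
        have h1 : a.1 ≠ x := fun hh => hx.1 hh.symm
        have h2 : a.2 ≠ x := fun hh => hx.2 hh.symm
        simp [Finsupp.add_apply, Finsupp.single_apply, h1, h2, h0]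
      obtain ⟨p, hp, hxp⟩ := ih this
      exact ⟨p, Multiset.mem_cons_of_mem hp, hxp⟩

/-- Rewrite `esum` by pulling out a member, with endpoint `x` first. -/
lemma esum_extract [DecidableEq (V × V)] {s : Multiset (V × V)} {p : V × V} (hp : p ∈ s)
    {x : V} (hx : x = p.1 ∨ x = p.2) :
    ∃ z : V, ((x, z) = p ∨ (z, x) = p) ∧
      esum s = Finsupp.single x 1 + Finsupp.single z 1 + esum (s.erase p) := by
  have h := Multiset.cons_erase hp
  rcases hx with hx | hx
  · refine ⟨p.2, Or.inl (by simp [hx]), ?_⟩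
    conv_lhs => rw [← h]
    rw [esum_cons, hx]
  · refine ⟨p.1, Or.inr (by simp [hx]), ?_⟩
    conv_lhs => rw [← h]
    rw [esum_cons, hx, add_comm (Finsupp.single p.1 1)]

end Comb

section Key
variable {V : Type*} (G : SimpleGraph V) (U : Set V)

/-- The key combinatorial exchange lemma. -/
lemma keyLemma (hU : ∀ i j : V, G.Adj i j → i ∈ U ∨ j ∈ U) :
    ∀ (n : ℕ) (E F : Multiset (V × V)), Multiset.card E = n → Multiset.card F = n →
      (∀ p ∈ E, G.Adj p.1 p.2) → (∀ p ∈ F, G.Adj p.1 p.2) →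
      ∀ (w : V) (m : V →₀ ℕ),
        Finsupp.single w 1 + esum F ≤ m + esum E →
        ∃ v, m v ≠ 0 ∧ ∃ Gs : Multiset (V × V), Multiset.card Gs = n ∧
          (∀ p ∈ Gs, G.Adj p.1 p.2) ∧ ∃ t, (t = w ∨ t ∈ U) ∧
            Finsupp.single t 1 + esum Gs ≤ Finsupp.single v 1 + esum E := by
  classical
  intro n
  induction n with
  | zero =>
    intro E F hE hF _ _ w m h
    rw [Multiset.card_eq_zero] at hE hF
    subst hE; subst hF
    have hw : m w ≠ 0 := by
      have := h w
      simp [Finsupp.add_apply, Finsupp.single_apply] at this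
      omega
    exact ⟨w, hw, 0, rfl, by simp, w, Or.inl rfl, by simp [h]⟩
  | succ n ih =>
    intro E F hE hF hEadj hFadj w m h
    by_cases hmw : m w ≠ 0
    · exact ⟨w, hmw, E, hE, hEadj, w, Or.inl rfl, le_refl _⟩
    push_neg at hmw
    -- w must be covered by some edge of E
    have hEw : esum E w ≠ 0 := by
      have := h w
      simp [Finsupp.add_apply, Finsupp.single_apply, hmw] at this
      omega
    obtain ⟨p, hpE, hwp⟩ := esum_mem_of_pos hEw
    obtain ⟨z, hpz, hEeq⟩ := esum_extract hpE hwp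
    set E' := E.erase p with hE'
    have hE'card : Multiset.card E' = n := by
      rw [hE', Multiset.card_erase_of_mem hpE, hE]; rfl
    have hE'adj : ∀ q ∈ E', G.Adj q.1 q.2 := fun q hq => hEadj q (Multiset.mem_of_mem_erase hq)
    -- cancel w from both sides
    have h2 : esum F ≤ m + Finsupp.single z 1 + esum E' := by
      intro x
      have := h x
      rw [hEeq] at this
      simp only [Finsupp.add_apply] at this ⊢
      omega
    by_cases hsplit : esum F ≤ m + esum E'
    · -- the pending slot z is not needed: strip any edge of F and restart from U
      have hFne : F ≠ 0 := by
        intro h0; rw [h0] at hF; simp at hF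
      obtain ⟨f, hfF⟩ := Multiset.exists_mem_of_ne_zero hFne
      have hfadj := hFadj f hfF
      have hfU : f.1 ∈ U ∨ f.2 ∈ U := hU f.1 f.2 hfadj
      set u' := if f.1 ∈ U then f.1 else f.2 with hu'
      have hu'U : u' ∈ U := by
        rw [hu']; split
        · assumption
        · tauto
      have hu'f : u' = f.1 ∨ u' = f.2 := by
        rw [hu']; split
        · exact Or.inl rfl
        · exact Or.inr rfl
      obtain ⟨z', hz', hFeq⟩ := esum_extract hfF hu'f
      have h3 : Finsupp.single u' 1 + esum (F.erase f) ≤ m + esum E' := by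
        intro x
        have h2x := hsplit x
        rw [hFeq] at h2x
        simp only [Finsupp.add_apply] at h2x ⊢
        omega
      have hFecard : Multiset.card (F.erase f) = n := by
        rw [Multiset.card_erase_of_mem hfF, hF]; rfl
      obtain ⟨v, hv, Gs, hGscard, hGsadj, t, htw, ht⟩ :=
        ih E' (F.erase f) hE'card hFecard hE'adj
          (fun q hq => hFadj q (Multiset.mem_of_mem_erase hq)) u' m h3
      have htU : t ∈ U := by rcases htw with rfl | h; exacts [hu'U, h]
      refine ⟨v, hv, p ::ₘ Gs, by simp [hGscard], ?_, t, Or.inr htU, ?_⟩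
      · intro q hq
        rcases Multiset.mem_cons.1 hq with rfl | hq
        · exact hEadj q hpE
        · exact hGsadj q hq
      · intro x
        have := ht x
        rw [esum_cons, hEeq]
        have hpxz : Finsupp.single p.1 1 x + Finsupp.single p.2 1 x
            = Finsupp.single w 1 x + Finsupp.single z 1 x := by
          rcases hpz with hp | hp
          · rw [← hp]
          · rw [← hp]; simp [add_comm]
        simp only [Finsupp.add_apply] at this ⊢
        omega
    · -- z is needed: some edge of F contains z, walk step
      have hFz : esum F z ≠ 0 := by
        intro h0
        apply hsplit
        intro x
        have h2x := h2 x
        by_cases hxz : x = z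
        · subst hxz; simp [Finsupp.add_apply, h0]
        · simp only [Finsupp.add_apply, Finsupp.single_apply, if_neg (Ne.symm hxz)] at h2x ⊢
          omega
      obtain ⟨q, hqF, hzq⟩ := esum_mem_of_pos hFz
      obtain ⟨q', hq', hFeq⟩ := esum_extract hqF hzq
      have h3 : Finsupp.single q' 1 + esum (F.erase q) ≤ m + esum E' := by
        intro x
        have h2x := h2 x
        rw [hFeq] at h2x
        simp only [Finsupp.add_apply] at h2x ⊢
        omega
      have hFecard : Multiset.card (F.erase q) = n := by
        rw [Multiset.card_erase_of_mem hqF, hF]; rfl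
      obtain ⟨v, hv, Gs, hGscard, hGsadj, t, htw, ht⟩ :=
        ih E' (F.erase q) hE'card hFecard hE'adj
          (fun r hr => hFadj r (Multiset.mem_of_mem_erase hr)) q' m h3
      rcases htw with rfl | htU
      · -- t = q' : extend with the walk edge q, target stays w
        refine ⟨v, hv, q ::ₘ Gs, by simp [hGscard], ?_, w, Or.inl rfl, ?_⟩
        · intro r hr
          rcases Multiset.mem_cons.1 hr with rfl | hr
          · exact hFadj r hqF
          · exact hGsadj r hr
        · intro x
          have := ht x
          rw [esum_cons, hEeq]
          have hqxz : Finsupp.single q.1 1 x + Finsupp.single q.2 1 x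
              = Finsupp.single z 1 x + Finsupp.single t 1 x := by
            rcases hq' with hq | hq
            · rw [← hq]
            · rw [← hq]; simp [add_comm]
          simp only [Finsupp.add_apply] at this ⊢
          omega
      · refine ⟨v, hv, p ::ₘ Gs, by simp [hGscard], ?_, t, Or.inr htU, ?_⟩
        · intro r hr
          rcases Multiset.mem_cons.1 hr with rfl | hr
          · exact hEadj r hpE
          · exact hGsadj r hr
        · intro x
          have := ht x
          rw [esum_cons, hEeq]
          have hpxz : Finsupp.single p.1 1 x + Finsupp.single p.2 1 x
              = Finsupp.single w 1 x + Finsupp.single z 1 x := by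
            rcases hpz with hp | hp
            · rw [← hp]
            · rw [← hp]; simp [add_comm]
          simp only [Finsupp.add_apply] at this ⊢
          omega
end Key

section Alg
variable {V K : Type*} [Field K]

lemma X_mul_X_eq (i j : V) : (X i * X j : MvPolynomial V K) =
    monomial (Finsupp.single i 1 + Finsupp.single j 1) 1 := by
  rw [X, X, monomial_mul, one_mul]

lemma prod_edges (s : Multiset (V × V)) :
    (s.map fun p => (X p.1 * X p.2 : MvPolynomial V K)).prod = monomial (esum s) 1 := by
  induction s using Multiset.induction with
  | empty => simp [esum]
  | cons a t ih =>
    rw [Multiset.map_cons, Multiset.prod_cons, ih, esum_cons, X_mul_X_eq, monomial_mul, one_mul]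

/-- The set of generators of `I(G)^k`. -/
def edgePowSet (G : SimpleGraph V) (k : ℕ) : Set (MvPolynomial V K) :=
  {p | ∃ E : Multiset (V × V), Multiset.card E = k ∧ (∀ q ∈ E, G.Adj q.1 q.2) ∧
    p = monomial (esum E) 1}

lemma edgeIdeal_pow (G : SimpleGraph V) (k : ℕ) :
    (edgeIdeal G (K := K)) ^ k = Ideal.span (edgePowSet G k) := by
  induction k with
  | zero =>
    rw [pow_zero]
    symm
    rw [Ideal.one_eq_top, Ideal.eq_top_iff_one]
    apply Ideal.subset_span
    exact ⟨0, rfl, by simp, by simp [esum]⟩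
  | succ k ih =>
    rw [pow_succ, ih, edgeIdeal, Ideal.span_mul_span']
    congr 1
    ext x
    constructor
    · rintro ⟨y, ⟨E, hEcard, hEadj, rfl⟩, z, ⟨i, j, hij, rfl⟩, rfl⟩
      refine ⟨(i, j) ::ₘ E, by simp [hEcard], ?_, ?_⟩
      · intro q hq
        rcases Multiset.mem_cons.1 hq with rfl | hq
        · exact hij
        · exact hEadj q hq
      · simp [esum_cons, X_mul_X_eq, monomial_mul, add_comm, add_left_comm, add_assoc]
    · rintro ⟨E, hEcard, hEadj, rfl⟩
      have hne : E ≠ 0 := by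
        intro h0; rw [h0] at hEcard; simp at hEcard
      obtain ⟨q, hq⟩ := Multiset.exists_mem_of_ne_zero hne
      classical
      refine ⟨monomial (esum (E.erase q)) 1,
        ⟨E.erase q, by rw [Multiset.card_erase_of_mem hq, hEcard]; rfl,
          fun r hr => hEadj r (Multiset.mem_of_mem_erase hr), rfl⟩,
        X q.1 * X q.2, ⟨q.1, q.2, hEadj q hq, rfl⟩, ?_⟩
      conv_rhs => rw [← Multiset.cons_erase hq]
      simp [esum_cons, X_mul_X_eq, monomial_mul, add_comm, add_left_comm, add_assoc]

/-- Exponents of the generators of `U · I(G)^k`. -/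
def covExps (U : Set V) (G : SimpleGraph V) (k : ℕ) : Set (V →₀ ℕ) :=
  {d | ∃ u ∈ U, ∃ E : Multiset (V × V), Multiset.card E = k ∧
    (∀ q ∈ E, G.Adj q.1 q.2) ∧ d = Finsupp.single u 1 + esum E}

lemma prod_ideal_eq (U : Set V) (G : SimpleGraph V) (k : ℕ) :
    varIdeal U * (edgeIdeal G (K := K)) ^ k
      = Ideal.span ((fun d => monomial d (1 : K)) '' covExps U G k) := by
  rw [edgeIdeal_pow, varIdeal, Ideal.span_mul_span']
  congr 1
  ext x
  constructor
  · rintro ⟨y, ⟨u, huU, rfl⟩, z, ⟨E, hEcard, hEadj, rfl⟩, rfl⟩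
    refine ⟨Finsupp.single u 1 + esum E, ⟨u, huU, E, hEcard, hEadj, rfl⟩, ?_⟩
    simp [show (X u : MvPolynomial V K) = monomial (Finsupp.single u 1) 1 from rfl, monomial_mul]
  · rintro ⟨d, ⟨u, huU, E, hEcard, hEadj, rfl⟩, rfl⟩
    refine ⟨X u, ⟨u, huU, rfl⟩, monomial (esum E) 1, ⟨E, hEcard, hEadj, rfl⟩, ?_⟩
    simp [show (X u : MvPolynomial V K) = monomial (Finsupp.single u 1) 1 from rfl, monomial_mul]

lemma mono_mem_of_le {U : Set V} {G : SimpleGraph V} {k : ℕ} {d e : V →₀ ℕ}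
    (hd : d ∈ covExps U G k) (hle : d ≤ e) :
    monomial e (1 : K) ∈ varIdeal U * (edgeIdeal G (K := K)) ^ k := by
  rw [prod_ideal_eq]
  have : monomial e (1 : K) = monomial (e - d) 1 * monomial d 1 := by
    rw [monomial_mul, one_mul, tsub_add_cancel_of_le hle]
  rw [this]
  exact Ideal.mul_mem_left _ _ (Ideal.subset_span ⟨d, hd, rfl⟩)

end Alg

/-- If `U` is a vertex cover of `G`, then for every `k ≥ 0` and every product `L` of `k`
edge monomials of `G`, the colon ideal `(U·I(G)^k : L)` is generated by variables. -/
theorem colon_generated_by_variables {V K : Type*} [Field K]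
    (G : SimpleGraph V) (U : Set V)
    (hU : ∀ i j : V, G.Adj i j → i ∈ U ∨ j ∈ U)
    (k : ℕ) (L : MvPolynomial V K)
    (hL : ∃ a b : Fin k → V, (∀ t, G.Adj (a t) (b t)) ∧
      L = ∏ t : Fin k, (X (a t) * X (b t))) :
    ∃ T : Set V,
      Submodule.colon (varIdeal U * (edgeIdeal G (K := K)) ^ k) (Ideal.span {L})
        = varIdeal T := by
  classical
  obtain ⟨a, b, hab, hLdef⟩ := hL
  set J := varIdeal U * (edgeIdeal G (K := K)) ^ k with hJ
  refine ⟨{v | (X v : MvPolynomial V K) * L ∈ J}, ?_⟩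
  set T := {v | (X v : MvPolynomial V K) * L ∈ J} with hT
  set Em := Multiset.map (fun t => (a t, b t)) Finset.univ.val with hEm
  have hEmcard : Multiset.card Em = k := by simp [hEm]
  have hEmadj : ∀ p ∈ Em, G.Adj p.1 p.2 := by
    intro p hp
    rw [hEm, Multiset.mem_map] at hp
    obtain ⟨t, _, rfl⟩ := hp
    exact hab t
  have hLm : L = monomial (esum Em) 1 := by
    rw [hLdef, Finset.prod_eq_multiset_prod, ← prod_edges, hEm, Multiset.map_map]
    rfl
  have hsetT : {p : MvPolynomial V K | ∃ v ∈ T, p = X v} = X '' T := by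
    ext q
    constructor
    · rintro ⟨v, hv, rfl⟩; exact ⟨v, hv, rfl⟩
    · rintro ⟨v, hv, rfl⟩; exact ⟨v, hv, rfl⟩
  apply le_antisymm
  · intro p hp
    rw [Ideal.mem_colon_span_singleton] at hp
    simp only [varIdeal]
    rw [hsetT, mem_ideal_span_X_image]
    intro mo hmo
    have hsup : mo + esum Em ∈ (p * L).support := by
      rw [mem_support_iff, hLm, coeff_mul_monomial, mul_one]
      exact mem_support_iff.1 hmo
    rw [hJ, prod_ideal_eq] at hp
    obtain ⟨d, hd, hdle⟩ := mem_ideal_span_monomial_image.1 hp _ hsup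
    obtain ⟨u, huU, F, hFcard, hFadj, rfl⟩ := hd
    obtain ⟨v, hv, Gs, hGcard, hGadj, t, htw, ht⟩ :=
      keyLemma G U hU k Em F hEmcard hFcard hEmadj hFadj u mo hdle
    have htU : t ∈ U := by rcases htw with rfl | h; exacts [huU, h]
    refine ⟨v, ?_, hv⟩
    show (X v : MvPolynomial V K) * L ∈ J
    rw [hLm]
    have hXvL : (X v : MvPolynomial V K) * monomial (esum Em) 1
        = monomial (Finsupp.single v 1 + esum Em) 1 := by
      simp [show (X v : MvPolynomial V K) = monomial (Finsupp.single v 1) 1 from rfl,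
        monomial_mul]
    rw [hXvL, hJ]
    exact mono_mem_of_le ⟨t, htU, Gs, hGcard, hGadj, rfl⟩ ht
  · simp only [varIdeal]
    rw [Ideal.span_le]
    rintro q ⟨v, hv, rfl⟩
    rw [SetLike.mem_coe, Ideal.mem_colon_span_singleton]
    exact hv
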